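/- Let (Z, W, ▷, ◁, ↼, ⇀) be a matched pair of Zinbiel algebras and r: W → Z a deformation map, i.e., r(u·v) − r(u)·r(v) = u⇀r(v) + r(u)↼v − r(u◁r(v) + r(u)▷v) for all u,v ∈ W. Then the subspace W̃ = {(r(u), u) : u ∈ W} is a Zinbiel subalgebra of the bicrossed product Z ⋈ W, and satisfies Z ∩ W̃ = {0} and Z + W̃ = Z ⋈ W; i.e., W̃ is a Z-complement of Z ⋈ W. -/

import Mathlib

/-- The bicrossed product multiplication on `Z ⊕ W`. -/
def bMul {k Z W : Type*} [CommRing k] [AddCommGroup Z] [Module k Z]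
    [AddCommGroup W] [Module k W]
    (m : Z →ₗ[k] Z →ₗ[k] Z) (mW : W →ₗ[k] W →ₗ[k] W)
    (tr : Z →ₗ[k] W →ₗ[k] W) (tl : W →ₗ[k] Z →ₗ[k] W)
    (pl : Z →ₗ[k] W →ₗ[k] Z) (pr : W →ₗ[k] Z →ₗ[k] Z)
    (a b : Z × W) : Z × W :=
  (m a.1 b.1 + pl a.1 b.2 + pr a.2 b.1,
   tr a.1 b.2 + tl a.2 b.1 + mW a.2 b.2)

/-- If `r : W → Z` is a deformation map of a matched pair of Zinbiel algebras,
then `W̃ = {(r(u), u) : u ∈ W}` is a Zinbiel subalgebra of `Z ⋈ W` and a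
`Z`-complement of `Z ⋈ W`. -/
theorem stmt9 {k Z W : Type*} [Field k] [CharZero k]
    [AddCommGroup Z] [Module k Z] [AddCommGroup W] [Module k W]
    (m : Z →ₗ[k] Z →ₗ[k] Z)
    (hZ : ∀ x y z : Z, m (m x y) z = m x (m y z + m z y))
    (mW : W →ₗ[k] W →ₗ[k] W)
    (hW : ∀ u v w : W, mW (mW u v) w = mW u (mW v w + mW w v))
    (tr : Z →ₗ[k] W →ₗ[k] W) (tl : W →ₗ[k] Z →ₗ[k] W)
    (pl : Z →ₗ[k] W →ₗ[k] Z) (pr : W →ₗ[k] Z →ₗ[k] Z)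
    -- matched pair: the bicrossed product is a Zinbiel algebra
    (hmp : ∀ a b c : Z × W,
      bMul m mW tr tl pl pr (bMul m mW tr tl pl pr a b) c =
        bMul m mW tr tl pl pr a
          (bMul m mW tr tl pl pr b c + bMul m mW tr tl pl pr c b))
    (r : W →ₗ[k] Z)
    -- deformation map condition
    (hr : ∀ u v : W,
      r (mW u v) - m (r u) (r v)
        = pr u (r v) + pl (r u) v - r (tl u (r v) + tr (r u) v)) :
    -- W̃ is a subalgebra
    (∀ a ∈ LinearMap.range ((r.prod (LinearMap.id : W →ₗ[k] W))),
     ∀ b ∈ LinearMap.range ((r.prod (LinearMap.id : W →ₗ[k] W))),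
      bMul m mW tr tl pl pr a b
        ∈ LinearMap.range ((r.prod (LinearMap.id : W →ₗ[k] W)))) ∧
    -- W̃ is a complement of Z ≅ Z × {0} in Z ⋈ W
    IsCompl (LinearMap.range (LinearMap.inl k Z W))
      (LinearMap.range ((r.prod (LinearMap.id : W →ₗ[k] W)))) := by
  constructor
  · rintro a ⟨u, rfl⟩ b ⟨v, rfl⟩
    refine ⟨tr (r u) v + tl u (r v) + mW u v, ?_⟩
    have h := hr u v
    rw [map_add] at h
    have h3 : r (mW u v) = m (r u) (r v)
        + (pr u (r v) + pl (r u) v - (r (tl u (r v)) + r (tr (r u) v))) := by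
      rw [← h]; abel
    have h2 : r (tr (r u) v) + r (tl u (r v)) + r (mW u v)
        = m (r u) (r v) + pl (r u) v + pr u (r v) := by
      rw [h3]; abel
    simp only [LinearMap.prod_apply, Pi.prod, LinearMap.id_coe, id_eq, bMul, map_add]
    exact Prod.ext h2 rfl
  · constructor
    · rw [disjoint_iff_inf_le]
      rintro ⟨x, w⟩ ⟨⟨z, hz⟩, ⟨u, hu⟩⟩
      simp only [LinearMap.inl_apply, LinearMap.prod_apply, Function.prod,
        LinearMap.id_coe, id_eq, Prod.mk.injEq] at hz hu
      have hu2 : u = 0 := by rw [hu.2]; exact hz.2.symm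
      have hx : x = 0 := by rw [← hu.1, hu2, map_zero]
      simp [Prod.ext_iff, hx, ← hz.2]
    · rw [codisjoint_iff_le_sup]
      rintro ⟨x, w⟩ -
      refine Submodule.mem_sup.2 ⟨(x - r w, 0), ⟨x - r w, rfl⟩, (r w, w), ⟨w, rfl⟩, ?_⟩
      ext <;> simp
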